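/- arXiv:2103.10874 — 6 statements merged into one kernel-verified Lean document; each statement's English description precedes it below -/
import Mathlib

section
/- With P defined by p_{ij} = ρ(x_j − x_i) (ρ(0)=v, ρ(x)=φ(x) for x≠0), for each a ∈ F_{r^m} the vector η_a is an eigenvector of P P^T with eigenvalue λ_a = v² + (1 + φ(−1)) v g(φ,χ_a) + φ(−1) (g(φ,χ_a))², and these λ_a over all a ∈ F_{r^m} give all eigenvalues of P P^T. -/
open Finset Polynomial

/-- each `η_a` is an eigenvector of `P * Pᵀ` with eigenvalue
`λ_a = v² + (1 + φ(-1)) v g(φ,χ_a) + φ(-1) g(φ,χ_a)²`, and the `λ_a` for `a ∈ K`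
exhaust all eigenvalues (roots of the characteristic polynomial) of `P * Pᵀ`. -/
theorem eigenvalues_PPT {r m p n q : ℕ} [Fact r.Prime] (hm : 0 < m) (hp : p.Prime)
    (hn : 0 < n) (hq : q = p ^ n) (hqr : Nat.Coprime q r)
    {K E : Type*} [Field K] [Fintype K] [DecidableEq K] [Algebra (ZMod r) K]
    (hK : Fintype.card K = r ^ m)
    [Field E] [CharP E p] [IsAlgClosed E]
    (ζ : E) (hζ : IsPrimitiveRoot ζ r)
    (φ : MulChar K E) (v : E) :
    let ρ : K → E := fun y => if y = 0 then v else φ y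
    let P : Matrix K K E := Matrix.of fun i j => ρ (j - i)
    let η : K → K → E := fun a x => ζ ^ (Algebra.trace (ZMod r) K (a * x)).val
    let g : K → E := fun a => ∑ x ∈ univ \ {0}, φ x * ζ ^ (Algebra.trace (ZMod r) K (a * x)).val
    let lam : K → E := fun a => v ^ 2 + (1 + φ (-1)) * v * g a + φ (-1) * (g a) ^ 2
    (∀ a : K, (P * P.transpose).mulVec (η a) = lam a • η a) ∧
      (∀ μ : E, (P * P.transpose).charpoly.IsRoot μ → ∃ a : K, μ = lam a) := by
  have hrp0 : r.Prime := Fact.out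
  haveI : NeZero r := ⟨hrp0.pos.ne'⟩
  haveI : CharP K r := charP_of_injective_algebraMap (algebraMap (ZMod r) K).injective r
  have hrc : r = ringChar K := (ringChar.eq K r).symm
  subst hrc
  intro ρ P η g lam
  set r := ringChar K with hr
  have hrp : r.Prime := Fact.out
  have hζr : ζ ^ r = 1 := hζ.pow_eq_one
  have hmod : ∀ k : ℕ, ζ ^ (k % r) = ζ ^ k := fun k => (pow_eq_pow_mod k hζr).symm
  have he_add : ∀ s t : ZMod r, ζ ^ ((s + t).val) = ζ ^ s.val * ζ ^ t.val := by
    intro s t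
    rw [ZMod.val_add, hmod, pow_add]
  have he_one : ∀ t : ZMod r, ζ ^ t.val = 1 ↔ t = 0 := by
    intro t
    rw [hζ.pow_eq_one_iff_dvd]
    constructor
    · intro h
      exact (ZMod.val_eq_zero t).mp (Nat.eq_zero_of_dvd_of_lt h (ZMod.val_lt t))
    · rintro rfl
      simp
  -- multiplicativity of η
  have hη_mul : ∀ a x y : K, η a (x + y) = η a x * η a y := by
    intro a x y
    simp only [η]
    rw [mul_add, map_add, he_add]
  have hη_zero : ∀ a : K, η a 0 = 1 := by
    intro a
    simp only [η, mul_zero, map_zero, ZMod.val_zero, pow_zero]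
  -- character sum vanishing
  have hsum : ∀ c : K, c ≠ 0 → ∑ x : K, ζ ^ ((Algebra.trace (ZMod r) K (c * x)).val) = 0 := by
    intro c hc
    obtain ⟨b, hb⟩ := FiniteField.trace_to_zmod_nondegenerate K hc
    set T := fun x : K => ζ ^ ((Algebra.trace (ZMod r) K (c * x)).val) with hT
    have key : T b * ∑ x : K, T x = ∑ x : K, T x := by
      rw [Finset.mul_sum]
      rw [← Equiv.sum_comp (Equiv.addLeft b) T]
      refine Finset.sum_congr rfl fun x _ => ?_
      simp only [hT, Equiv.coe_addLeft]
      rw [mul_add, map_add, he_add]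
    have h0 : (T b - 1) * ∑ x : K, T x = 0 := by
      rw [sub_mul, one_mul, key, sub_self]
    rcases mul_eq_zero.mp h0 with h | h
    · exact absurd ((he_one _).mp (sub_eq_zero.mp h)) hb
    · exact h
  have hPmul : ∀ a : K, P.mulVec (η a) = (v + g a) • η a := by
    intro a
    funext i
    show ∑ j : K, ρ (j - i) * η a j = _
    calc ∑ j : K, ρ (j - i) * η a j
        = ∑ x : K, ρ x * η a (x + i) := by
          rw [← Equiv.sum_comp (Equiv.addRight i) (fun j => ρ (j - i) * η a j)]
          refine Finset.sum_congr rfl fun x _ => ?_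
          simp [Equiv.coe_addRight, add_sub_cancel_right]
      _ = (∑ x : K, ρ x * η a x) * η a i := by
          rw [Finset.sum_mul]
          exact Finset.sum_congr rfl fun x _ => by rw [hη_mul, mul_assoc]
      _ = (v + g a) * η a i := by
          congr 1
          rw [Finset.sum_eq_sum_sdiff_singleton_add (Finset.mem_univ (0 : K))]
          have h0 : ρ 0 * η a 0 = v := by simp [ρ, hη_zero]
          have hrest : ∑ x ∈ univ \ {0}, ρ x * η a x = g a := by
            refine Finset.sum_congr rfl fun x hx => ?_
            have hx0 : x ≠ 0 := by simpa using (Finset.mem_sdiff.mp hx).2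
            simp only [ρ, η, if_neg hx0]
          rw [h0, hrest, add_comm]
      _ = ((v + g a) • η a) i := rfl
  have hPTmul : ∀ a : K, P.transpose.mulVec (η a) = (v + φ (-1) * g a) • η a := by
    intro a
    funext i
    show ∑ j : K, ρ (i - j) * η a j = _
    calc ∑ j : K, ρ (i - j) * η a j
        = ∑ x : K, ρ x * η a (i - x) := by
          rw [← Equiv.sum_comp (Equiv.subLeft i) (fun j => ρ (i - j) * η a j)]
          refine Finset.sum_congr rfl fun x _ => ?_
          simp [Equiv.subLeft_apply, sub_sub_cancel]
      _ = (∑ x : K, ρ x * η a (-x)) * η a i := by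
          rw [Finset.sum_mul]
          refine Finset.sum_congr rfl fun x _ => ?_
          rw [sub_eq_neg_add, hη_mul, mul_assoc]
      _ = (v + φ (-1) * g a) * η a i := by
          congr 1
          rw [Finset.sum_eq_sum_sdiff_singleton_add (Finset.mem_univ (0 : K))]
          have h0 : ρ 0 * η a (-0) = v := by simp [ρ, hη_zero]
          have hrest : ∑ x ∈ univ \ {0}, ρ x * η a (-x) = φ (-1) * g a := by
            rw [show φ (-1) * g a = ∑ x ∈ univ \ {0}, φ (-1) * (φ x * η a x) from by
              rw [← Finset.mul_sum]]
            refine Finset.sum_nbij' (fun x => -x) (fun x => -x) ?_ ?_ ?_ ?_ ?_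
            · intro x hx
              simp only [Finset.mem_sdiff, Finset.mem_univ, Finset.mem_singleton, true_and,
                neg_eq_zero] at hx ⊢
              exact hx
            · intro x hx
              simp only [Finset.mem_sdiff, Finset.mem_univ, Finset.mem_singleton, true_and,
                neg_eq_zero] at hx ⊢
              exact hx
            · intro x _; simp
            · intro x _; simp
            · intro x hx
              have hx0 : x ≠ 0 := by simpa using (Finset.mem_sdiff.mp hx).2
              simp only [ρ, if_neg hx0]
              have hφ : φ (-1) * φ (-x) = φ x := by
                rw [← map_mul, neg_mul_neg, one_mul]
              rw [← hφ]
              ring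
          rw [h0, hrest, add_comm]
      _ = ((v + φ (-1) * g a) • η a) i := rfl
  have hmain : ∀ a : K, (P * P.transpose).mulVec (η a) = lam a • η a := by
    intro a
    rw [← Matrix.mulVec_mulVec, hPTmul, Matrix.mulVec_smul, hPmul, smul_smul]
    congr 1
    simp only [lam]
    ring
  refine ⟨hmain, ?_⟩
  -- second part
  intro μ hμ
  classical
  set A := P * P.transpose with hA
  set M : Matrix K K E := Matrix.of (fun x a => η a x) with hM
  set D : Matrix K K E := Matrix.diagonal lam with hD
  have hMD : A * M = M * D := by
    ext x a
    have h1 := congrFun (hmain a) x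
    have hL : (A * M) x a = (A.mulVec (η a)) x := by
      simp [Matrix.mul_apply, Matrix.mulVec, dotProduct, hM]
    have hR : (M * D) x a = η a x * lam a := by
      simp [hD, Matrix.mul_diagonal, hM]
    rw [hL, hR, h1]
    simp [mul_comm]
  -- inverse matrix
  set c : E := (Fintype.card K : E) with hc
  have hcne : c ≠ 0 := by
    have hpr : ¬ p ∣ r := by
      have hpq : p ∣ q := hq ▸ dvd_pow_self p hn.ne'
      have : Nat.Coprime p r := Nat.Coprime.coprime_dvd_left hpq hqr
      exact (Nat.Prime.coprime_iff_not_dvd hp).mp this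
    have hprm : ¬ p ∣ r ^ m := fun h => hpr (hp.dvd_of_dvd_pow h)
    rw [hc, hK]
    intro h
    exact hprm ((CharP.cast_eq_zero_iff E p _).mp h)
  set M' : Matrix K K E := Matrix.of (fun a x => η (-a) x) with hM'
  have horth : M' * M = c • (1 : Matrix K K E) := by
    ext a b
    have : (M' * M) a b = ∑ x : K, ζ ^ ((Algebra.trace (ZMod r) K ((b - a) * x)).val) := by
      simp only [Matrix.mul_apply, hM', hM, Matrix.of_apply, η]
      refine Finset.sum_congr rfl fun x _ => ?_
      rw [← he_add, ← map_add]
      congr 2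
      ring
      rfl
    rw [this]
    by_cases hab : a = b
    · subst hab
      simp [Matrix.one_apply, Matrix.smul_apply, sub_self, hc]
    · rw [hsum (b - a) (sub_ne_zero.mpr (Ne.symm hab))]
      simp [Matrix.one_apply, Matrix.smul_apply, hab]
  haveI : Invertible M := by
    apply invertibleOfLeftInverse M (c⁻¹ • M')
    rw [Matrix.smul_mul, horth, smul_smul, inv_mul_cancel₀ hcne, one_smul]
  -- evaluate charpoly at μ
  have hdet0 : ((μ : E) • (1 : Matrix K K E) - A).det = 0 := by
    have h2 : Matrix.det ((Matrix.charmatrix A).map (evalRingHom μ)) = 0 := by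
      rw [show (Matrix.charmatrix A).map (evalRingHom μ) = (evalRingHom μ).mapMatrix (Matrix.charmatrix A) from rfl,
        ← RingHom.map_det]
      exact hμ
    have h3 : (Matrix.charmatrix A).map (evalRingHom μ) = μ • (1 : Matrix K K E) - A := by
      ext i j
      by_cases h : i = j
      · subst h
        simp [Matrix.charmatrix_apply_eq, Matrix.one_apply, Matrix.smul_apply,
          Matrix.sub_apply]
      · simp [Matrix.charmatrix_apply_ne _ _ _ h, Matrix.one_apply_ne h, Matrix.smul_apply,
          Matrix.sub_apply, Matrix.one_apply, h]
    rwa [h3] at h2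
  have hconj : μ • (1 : Matrix K K E) - D = ⅟M * (μ • (1 : Matrix K K E) - A) * M := by
    have hAMD : A = M * D * ⅟M := by
      rw [← hMD, Matrix.mul_assoc, mul_invOf_self, Matrix.mul_one]
    rw [hAMD]
    rw [Matrix.mul_sub, Matrix.sub_mul]
    congr 1
    · rw [Matrix.mul_smul, Matrix.mul_one, Matrix.smul_mul, invOf_mul_self]
    · rw [← Matrix.mul_assoc, ← Matrix.mul_assoc, invOf_mul_self, Matrix.one_mul,
        Matrix.mul_assoc, invOf_mul_self, Matrix.mul_one]
  have hdetD : (μ • (1 : Matrix K K E) - D).det = 0 := by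
    rw [hconj, Matrix.det_mul, Matrix.det_mul, hdet0, mul_zero, zero_mul]
  have hdiag : μ • (1 : Matrix K K E) - D = Matrix.diagonal (fun a => μ - lam a) := by
    ext i j
    by_cases h : i = j
    · subst h
      simp [hD, Matrix.diagonal, Matrix.one_apply, Matrix.smul_apply, Matrix.sub_apply]
    · simp [hD, Matrix.diagonal, Matrix.one_apply_ne h, Matrix.smul_apply, Matrix.sub_apply, h]
  rw [hdiag, Matrix.det_diagonal] at hdetD
  obtain ⟨a, -, ha⟩ := Finset.prod_eq_zero_iff.mp hdetD
  exact ⟨a, sub_eq_zero.mp ha⟩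
end

section
/- Let C be an [n,k] linear code over F_q with generator matrix G = [I_k | P]. Then C is LCD (i.e., C ∩ C^⊥ = {0}) if and only if the matrix I_k + P P^T is nonsingular. -/
/-- The dual code of a linear code `C ⊆ F^ι` with respect to the standard
(Euclidean) inner product. -/
def dualCode {F : Type*} [Field F] {ι : Type*} [Fintype ι]
    (C : Submodule F (ι → F)) : Submodule F (ι → F) where
  carrier := {v | ∀ c ∈ C, dotProduct c v = 0}
  add_mem' := by
    intro a b ha hb c hc
    simp [dotProduct_add, ha c hc, hb c hc]
  zero_mem' := by
    intro c hc
    simp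
  smul_mem' := by
    intro t a ha c hc
    simp [dotProduct_smul, ha c hc]

/-- a linear `[n, k]` code `C` over `F_q` with generator matrix
`G = [I_k | P]` is LCD (`C ∩ C^⊥ = 0`) iff `I_k + P Pᵀ` is nonsingular. -/
theorem lcd_iff_nonsingular {F : Type*} [Field F] [Fintype F] {k l : ℕ}
    (P : Matrix (Fin k) (Fin l) F) :
    let G := Matrix.fromCols (1 : Matrix (Fin k) (Fin k) F) P
    let C := Submodule.span F (Set.range fun i => G i)
    C ⊓ dualCode C = ⊥ ↔ IsUnit (1 + P * P.transpose).det := by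
  intro G C
  classical
  have hGGt : G * G.transpose = 1 + P * P.transpose := by
    rw [show G = Matrix.fromCols 1 P from rfl, Matrix.transpose_fromCols,
      Matrix.fromCols_mul_fromRows, Matrix.transpose_one, Matrix.mul_one]
  have hdual : ∀ v, v ∈ dualCode C ↔ G.mulVec v = 0 := by
    intro v
    constructor
    · intro h
      funext i
      exact h (G i) (Submodule.subset_span ⟨i, rfl⟩)
    · intro h c hc
      induction hc using Submodule.span_induction with
      | mem x hx =>
        obtain ⟨i, rfl⟩ := hx
        exact congrFun h i
      | zero => simp
      | add a b _ _ ha hb => simp [add_dotProduct, ha, hb]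
      | smul t a _ ha => simp [smul_dotProduct, ha]
  have hsum : ∀ x : Fin k → F, (∑ i, x i • G i) = G.transpose.mulVec x := by
    intro x
    funext j
    simp [Matrix.mulVec, dotProduct, Finset.sum_apply, mul_comm]
  constructor
  · intro h
    rw [isUnit_iff_ne_zero]
    intro hdet
    obtain ⟨v, hv0, hv⟩ := (Matrix.exists_mulVec_eq_zero_iff).mpr (by rwa [← hGGt] at hdet)
    set c := G.transpose.mulVec v with hc
    have hcC : c ∈ C := (Submodule.mem_span_range_iff_exists_fun F).mpr ⟨v, hsum v⟩
    have hcD : c ∈ dualCode C := (hdual c).mpr (by rw [hc, Matrix.mulVec_mulVec, hv])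
    have hc0 : c = 0 := by
      have : c ∈ C ⊓ dualCode C := Submodule.mem_inf.mpr ⟨hcC, hcD⟩
      rw [h] at this
      exact this
    apply hv0
    funext j
    have := congrFun hc0 (Sum.inl j)
    rwa [hc, show G.transpose = Matrix.fromRows 1 P.transpose by
        rw [show G = Matrix.fromCols 1 P from rfl, Matrix.transpose_fromCols,
          Matrix.transpose_one],
      Matrix.fromRows_mulVec, Sum.elim_inl, Matrix.one_mulVec] at this
  · intro h
    rw [eq_bot_iff]
    intro c hc
    obtain ⟨hcC, hcD⟩ := Submodule.mem_inf.mp hc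
    obtain ⟨x, hx⟩ := (Submodule.mem_span_range_iff_exists_fun F).mp hcC
    have hc' : c = G.transpose.mulVec x := by rw [← hx, hsum]
    have hMx : (G * G.transpose).mulVec x = 0 := by
      rw [← Matrix.mulVec_mulVec, ← hc']
      exact (hdual c).mp hcD
    have hx0 : x = 0 := by
      by_contra hx0
      exact (isUnit_iff_ne_zero.mp h)
        (by rw [← hGGt]; exact (Matrix.exists_mulVec_eq_zero_iff).mp ⟨x, hx0, hMx⟩)
    rw [Submodule.mem_bot, hc', hx0, Matrix.mulVec_zero]
end

section
/- Let C be an [n,k] linear code over F_q with generator matrix G = [I_k | P]. If the matrix P P^T has eigenvalue −1 with algebraic multiplicity 1, then the hull C ∩ C^⊥ has dimension 1. -/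
open Polynomial Matrix

lemma charpoly_one_add' {F : Type*} [Field F] {k : ℕ} (A : Matrix (Fin k) (Fin k) F) :
    ((1 : Matrix (Fin k) (Fin k) F) + A).charpoly = (A.charpoly).comp (X - C 1) := by
  have hmap : (charmatrix A).map (aeval (X - C 1) : F[X] → F[X]) = charmatrix (1 + A) := by
    ext i j
    by_cases hij : i = j
    · subst hij
      simp [charmatrix_apply, Matrix.map_apply, Matrix.one_apply, sub_sub]
    · simp [charmatrix_apply, Matrix.map_apply, Matrix.one_apply, hij,
        Matrix.diagonal_apply_ne _ hij]
  have h2 := RingHom.map_det ((aeval (X - C 1) : F[X] →ₐ[F] F[X]) : F[X] →+* F[X]) (charmatrix A)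
  rw [RingHom.mapMatrix_apply] at h2
  simp only [AlgHom.coe_toRingHom] at h2
  rw [Matrix.charpoly, Matrix.charpoly, ← hmap, ← h2]
  show aeval (X - C 1) (charmatrix A).det = _
  rw [aeval_def, Polynomial.comp, Polynomial.algebraMap_eq]

lemma finrank_ker_eq_one' {F : Type*} [Field F] {k : ℕ} (M : Matrix (Fin k) (Fin k) F)
    (h : M.charpoly.natTrailingDegree = 1) :
    Module.finrank F ↥(LinearMap.ker (Matrix.toLin' M)) = 1 := by
  set ψ : Module.End F (Fin k → F) := Matrix.toLin' M with hψ
  have hch : LinearMap.charpoly ψ = M.charpoly := by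
    rw [← LinearMap.charpoly_toMatrix ψ (Pi.basisFun F (Fin k)),
      LinearMap.toMatrix_eq_toMatrix', hψ, LinearMap.toMatrix'_toLin']
  have hmax : Module.finrank F ↥(Module.End.maxGenEigenspace ψ 0) = 1 := by
    rw [LinearMap.finrank_maxGenEigenspace_zero_eq, hch, h]
  have hle : LinearMap.ker ψ ≤ Module.End.maxGenEigenspace ψ 0 := by
    intro x hx
    rw [Module.End.mem_maxGenEigenspace]
    exact ⟨1, by simpa using hx⟩
  have hub : Module.finrank F ↥(LinearMap.ker ψ) ≤ 1 := hmax ▸ Submodule.finrank_mono hle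
  have hne : LinearMap.ker ψ ≠ ⊥ := by
    intro hbot
    have hinj : ∀ n : ℕ, ∀ x : Fin k → F, (ψ ^ n) x = 0 → x = 0 := by
      intro n
      induction n with
      | zero => intro x hx; simpa using hx
      | succ n ih =>
        intro x hx
        rw [pow_succ, Module.End.mul_apply] at hx
        exact (LinearMap.ker_eq_bot.mp hbot) (by simpa using ih (ψ x) hx)
    have : Module.End.maxGenEigenspace ψ 0 = ⊥ := by
      ext x
      rw [Module.End.mem_maxGenEigenspace]
      simp only [zero_smul, sub_zero, Submodule.mem_bot]
      exact ⟨fun ⟨n, hn⟩ => hinj n x hn, fun hx => ⟨0, by simp [hx]⟩⟩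
    rw [this] at hmax
    simp at hmax
  have : Nontrivial ↥(LinearMap.ker ψ) := Submodule.nontrivial_iff_ne_bot.mpr hne
  have hlb : 0 < Module.finrank F ↥(LinearMap.ker ψ) := Module.finrank_pos_iff.mpr this
  omega

/-- if `P Pᵀ` has `-1` as an eigenvalue with algebraic multiplicity one
(i.e. `-1` is a root of multiplicity one of its characteristic polynomial), then the
code with generator matrix `[I_k | P]` has one-dimensional hull. -/
theorem one_dim_hull_of_multiplicity_one {F : Type*} [Field F] [Fintype F] {k l : ℕ}
    (P : Matrix (Fin k) (Fin l) F)
    (h : (P * P.transpose).charpoly.rootMultiplicity (-1) = 1) :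
    let G := Matrix.fromCols (1 : Matrix (Fin k) (Fin k) F) P
    let C := Submodule.span F (Set.range fun i => G i)
    Module.finrank F ↥(C ⊓ dualCode C) = 1 := by
  intro G C
  set M : Matrix (Fin k) (Fin k) F := 1 + P * P.transpose with hM
  set L := Matrix.vecMulLinear G with hLdef
  have hGG : G * G.transpose = M := by
    rw [hM]
    show Matrix.fromCols 1 P * (Matrix.fromCols 1 P)ᵀ = _
    rw [Matrix.transpose_fromCols, Matrix.transpose_one, Matrix.fromCols_mul_fromRows,
      Matrix.one_mul]
  have hC : C = LinearMap.range L := (range_vecMulLinear G).symm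
  have hkey : ∀ c, G *ᵥ (L c) = M *ᵥ c := by
    intro c
    rw [hLdef, Matrix.vecMulLinear_apply, ← Matrix.mulVec_transpose, Matrix.mulVec_mulVec, hGG]
  have hull_eq : C ⊓ dualCode C = Submodule.map L (LinearMap.ker (Matrix.toLin' M)) := by
    apply le_antisymm
    · rintro x ⟨hxC, hxD⟩
      rw [hC] at hxC
      obtain ⟨c, rfl⟩ := hxC
      refine ⟨c, ?_, rfl⟩
      simp only [SetLike.mem_coe, LinearMap.mem_ker, Matrix.toLin'_apply]
      rw [← hkey]
      funext i
      exact hxD (G i) (Submodule.subset_span ⟨i, rfl⟩)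
    · rintro x ⟨c, hc, rfl⟩
      simp only [SetLike.mem_coe, LinearMap.mem_ker, Matrix.toLin'_apply] at hc
      constructor
      · rw [hC]; exact ⟨c, rfl⟩
      · intro v hv
        rw [hC] at hv
        obtain ⟨a, rfl⟩ := hv
        show (a ᵥ* G) ⬝ᵥ (L c) = 0
        rw [← Matrix.dotProduct_mulVec, hkey, hc, dotProduct_zero]
  have hLinj : Function.Injective L := by
    intro a b hab
    funext i
    have := congrFun hab (Sum.inl i)
    simpa [hLdef, Matrix.vecMulLinear_apply, G, Matrix.vecMul_fromCols,
      Matrix.vecMul_one] using this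
  have hdeg : M.charpoly.natTrailingDegree = 1 := by
    rw [hM, charpoly_one_add',
      show (X - Polynomial.C (1 : F)) = X + Polynomial.C (-1 : F) by rw [map_neg, sub_eq_add_neg],
      ← rootMultiplicity_eq_natTrailingDegree]
    exact h
  rw [hull_eq,
    ← LinearEquiv.finrank_eq (Submodule.equivMapOfInjective L hLinj
      (LinearMap.ker (Matrix.toLin' M)))]
  exact finrank_ker_eq_one' M hdeg
end

section
/- Suppose N | (r^m − 1), N | (q − 1), gcd(p,r) = 1, there exists a positive integer s with N | (p^s − 1), and φ(p^{2s}) ≠ 1 where φ is the order-N multiplicative homomorphism from F_{r^m}^* to F_q^* defined by φ(α^k) = u^k (α a primitive element of F_{r^m}, u a fixed element of order N in F_q^*). Then for all a ∈ F_{r^m}^*, φ(−1)·(g(φ, χ_a))² ≠ −1; consequently the code with generator matrix [I_{r^m} | P] (with ρ(0)=0) is a [2r^m, r^m] LCD code over F_q. -/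
open Finset

section Helpers
variable {r : ℕ} [Fact r.Prime] {E : Type*} [Field E] {ζ : E}

lemma zeta_congr (hζ : IsPrimitiveRoot ζ r) {a b : ℕ} (h : (a : ZMod r) = b) :
    ζ ^ a = ζ ^ b := by
  have hmod : a % r = b % r := (ZMod.natCast_eq_natCast_iff' a b r).mp h
  have key : ∀ c : ℕ, ζ ^ c = ζ ^ (c % r) := by
    intro c
    conv_lhs => rw [← Nat.div_add_mod c r]
    rw [pow_add, pow_mul, hζ.pow_eq_one, one_pow, one_mul]
  rw [key a, key b, hmod]

lemma zmod_cast_val (t : ZMod r) : ((t.val : ℕ) : ZMod r) = t := by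
  haveI : NeZero r := ⟨(Fact.out : r.Prime).pos.ne'⟩
  exact ZMod.natCast_rightInverse t

lemma psi_add (hζ : IsPrimitiveRoot ζ r) (t₁ t₂ : ZMod r) :
    ζ ^ (t₁ + t₂).val = ζ ^ t₁.val * ζ ^ t₂.val := by
  rw [← pow_add]
  exact zeta_congr hζ (by rw [zmod_cast_val, Nat.cast_add, zmod_cast_val, zmod_cast_val])

lemma psi_pow (hζ : IsPrimitiveRoot ζ r) (t : ZMod r) (n : ℕ) :
    (ζ ^ t.val) ^ n = ζ ^ (((n : ZMod r)) * t).val := by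
  rw [← pow_mul]
  exact zeta_congr hζ (by rw [Nat.cast_mul, zmod_cast_val, zmod_cast_val]; ring)

end Helpers

open Matrix

/-- if `N ∣ r^m - 1`, `N ∣ q - 1`, `gcd (p, r) = 1`, `N ∣ p^s - 1` for some
`s ≥ 1` and `φ (p^{2s}) ≠ 1`, where `φ` is the order-`N` multiplicative character of
`F_{r^m}` determined by `φ (α^k) = u^k`, then `φ(-1) g(φ, χ_a)² ≠ -1` for every
`a ≠ 0`, and the code with generator matrix `[I | P]` (diagonal of `P` zero) is a
`[2 r^m, r^m]` LCD code over `F_q`. -/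
theorem lcd_construction_A_case1 {r m p e q N : ℕ} [Fact r.Prime] (hm : 0 < m)
    (hp : p.Prime) (he : 0 < e) (hq : q = p ^ e) (hpr : Nat.Coprime p r)
    (hN : 1 < N) (hNr : N ∣ r ^ m - 1) (hNq : N ∣ q - 1)
    {K F E : Type*} [Field K] [Fintype K] [DecidableEq K] [Algebra (ZMod r) K]
    (hK : Fintype.card K = r ^ m)
    [Field F] [Fintype F] [CharP F p] (hF : Fintype.card F = q)
    [Field E] [CharP E p] [IsAlgClosed E] [Algebra F E]
    (ζ : E) (hζ : IsPrimitiveRoot ζ r)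
    (α : Kˣ) (hα : ∀ x : Kˣ, x ∈ Subgroup.zpowers α)
    (u : F) (hu : orderOf u = N)
    (φ : MulChar K F) (hφ : ∀ k : ℕ, φ ((α ^ k : Kˣ) : K) = u ^ k)
    (s : ℕ) (hs : 0 < s) (hNs : N ∣ p ^ s - 1)
    (hp2s : φ ((p : K) ^ (2 * s)) ≠ 1) :
    let g : K → E := fun a =>
      ∑ x ∈ univ \ {0},
        algebraMap F E (φ x) * ζ ^ (Algebra.trace (ZMod r) K (a * x)).val
    let P : Matrix K K F := Matrix.of fun i j => if j = i then 0 else φ (j - i)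
    let G := Matrix.fromCols (1 : Matrix K K F) P
    let C := Submodule.span F (Set.range fun i => G i)
    (∀ a : K, a ≠ 0 → algebraMap F E (φ (-1)) * (g a) ^ 2 ≠ -1) ∧
      C ⊓ dualCode C = ⊥ ∧ Module.finrank F C = r ^ m := by
  intro g P G C
  haveI : NeZero r := ⟨(Fact.out : r.Prime).pos.ne'⟩
  haveI : Fact p.Prime := ⟨hp⟩
  haveI : FiniteDimensional (ZMod r) K := Module.Finite.of_finite
  haveI : CharP K r := charP_of_injective_algebraMap (algebraMap (ZMod r) K).injective r
  have hrp : r.Prime := Fact.out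
  set f : F →+* E := algebraMap F E with hf
  set Tr : K →ₗ[ZMod r] ZMod r := Algebra.trace (ZMod r) K with hTrdef
  set Ψ : ZMod r → E := fun t => ζ ^ t.val with hΨ
  -- basic facts
  have hφ0 : φ (0 : K) = 0 := φ.map_nonunit (by simp)
  have hpK0 : ((p : ℕ) : K) ≠ 0 := by
    rw [Ne, CharP.cast_eq_zero_iff K r]
    intro hd
    exact hrp.one_lt.ne' (hpr.symm.eq_one_of_dvd hd)
  have hrE : ((r : ℕ) : E) ≠ 0 := by
    rw [Ne, CharP.cast_eq_zero_iff E p]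
    intro hd
    exact hp.one_lt.ne' (hpr.eq_one_of_dvd hd)
  have hΨadd : ∀ t₁ t₂ : ZMod r, Ψ (t₁ + t₂) = Ψ t₁ * Ψ t₂ := fun t₁ t₂ => psi_add hζ t₁ t₂
  have hΨpow : ∀ (t : ZMod r) (n : ℕ), (Ψ t) ^ n = Ψ ((n : ZMod r) * t) :=
    fun t n => psi_pow hζ t n
  have hΨ0 : Ψ 0 = 1 := by simp [hΨ, ZMod.val_zero]
  -- φ is fixed by the p^s-power map
  have hφpow : ∀ x : K, x ≠ 0 → φ x ^ p ^ s = φ x := by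
    intro x hx
    obtain ⟨k, hk⟩ := (isOfFinOrder_of_finite α).mem_powers_iff_mem_zpowers.mpr
      (hα (Units.mk0 x hx))
    have hk' : ((α ^ k : Kˣ) : K) = x := congrArg Units.val hk
    have hus : u ^ p ^ s = u := by
      have h1 : u ^ (p ^ s - 1) = 1 := orderOf_dvd_iff_pow_eq_one.mp (by rw [hu]; exact hNs)
      calc u ^ p ^ s = u ^ (p ^ s - 1 + 1) := by
            rw [Nat.sub_add_cancel (Nat.one_le_pow _ _ hp.pos)]
        _ = u := by rw [pow_succ, h1, one_mul]
    rw [← hk', hφ k, ← pow_mul, mul_comm k, pow_mul, hus]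
  -- the full Gauss sum
  set gE : K → E := fun a => ∑ x : K, f (φ x) * Ψ (Tr (a * x)) with hgE
  have hg : ∀ a : K, g a = gE a := by
    intro a
    show (∑ x ∈ univ \ {0}, f (φ x) * ζ ^ (Tr (a * x)).val)
        = ∑ x : K, f (φ x) * ζ ^ (Tr (a * x)).val
    refine Finset.sum_subset (Finset.subset_univ _) ?_
    intro x _ hx
    have : x = 0 := by
      by_contra hxx
      exact hx (Finset.mem_sdiff.mpr ⟨Finset.mem_univ _, by simpa using hxx⟩)
    simp [this, hφ0]
  -- trace twisting
  have hcastpK : ∀ (c : ZMod r) (y : K), Tr (algebraMap (ZMod r) K c * y) = c * Tr y := by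
    intro c y
    rw [← Algebra.smul_def, _root_.map_smul, smul_eq_mul]
  have halg : algebraMap (ZMod r) K (((p ^ s : ℕ) : ZMod r)) = (p : K) ^ s := by
    rw [_root_.map_natCast, Nat.cast_pow]
  have hfrobg : ∀ a : K, gE a ^ p ^ s = gE ((p : K) ^ s * a) := by
    intro a
    rw [hgE]
    rw [sum_pow_char_pow]
    refine Finset.sum_congr rfl ?_
    intro x _
    by_cases hx : x = 0
    · simp [hx, hφ0, zero_pow (pow_ne_zero s hp.ne_zero : p ^ s ≠ 0)]
    · rw [mul_pow, ← _root_.map_pow, hφpow x hx, hΨpow]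
      congr 1
      have harg : (p : K) ^ s * a * x = algebraMap (ZMod r) K (((p ^ s : ℕ) : ZMod r)) * (a * x) := by
        rw [halg]; ring
      rw [harg, hcastpK]
  have hcK : ((p : K) ^ s) ≠ 0 := pow_ne_zero _ hpK0
  have hshift : ∀ a : K, f (φ ((p : K) ^ s)) * gE ((p : K) ^ s * a) = gE a := by
    intro a
    rw [hgE, Finset.mul_sum]
    refine Fintype.sum_equiv (Equiv.mulLeft₀ ((p : K) ^ s) hcK) _ _ ?_
    intro x
    simp only [Equiv.mulLeft₀_apply]
    rw [_root_.map_mul φ, _root_.map_mul f]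
    have harg : a * ((p : K) ^ s * x) = (p : K) ^ s * a * x := by ring
    rw [harg]
    ring
  have hm1 : (-1 : E) ≠ 0 := neg_ne_zero.mpr one_ne_zero
  have key1all : ∀ a : K, f (φ (-1)) * gE a ^ 2 ≠ -1 := by
    intro a heq
    have h0 : (f (φ (-1)) * gE a ^ 2) ^ p ^ s = (-1 : E) ^ p ^ s := by rw [heq]
    rw [show ((-1 : E)) ^ p ^ s = -1 from neg_one_pow_char_pow (R := E) (p := p) (n := s), mul_pow, ← pow_mul, mul_comm 2 (p ^ s), pow_mul,
      ← _root_.map_pow, hφpow _ (neg_ne_zero.mpr one_ne_zero), hfrobg] at h0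
    have h1 : f (φ (-1)) * gE a ^ 2 = f (φ ((p : K) ^ s)) ^ 2 * (-1) := by
      calc f (φ (-1)) * gE a ^ 2
          = f (φ (-1)) * (f (φ ((p : K) ^ s)) * gE ((p : K) ^ s * a)) ^ 2 := by rw [hshift]
        _ = f (φ ((p : K) ^ s)) ^ 2 * (f (φ (-1)) * gE ((p : K) ^ s * a) ^ 2) := by ring
        _ = f (φ ((p : K) ^ s)) ^ 2 * (-1) := by rw [h0]
    rw [heq] at h1
    have h2 : f (φ ((p : K) ^ s)) ^ 2 = 1 :=
      mul_right_cancel₀ hm1 (by rw [one_mul]; exact h1.symm)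
    apply hp2s
    have h3 : f (φ ((p : K) ^ (2 * s))) = f 1 := by
      rw [_root_.map_one, show (p : K) ^ (2 * s) = ((p : K) ^ s) ^ 2 by rw [← pow_mul, mul_comm],
        _root_.map_pow φ, _root_.map_pow f, h2]
    exact f.injective h3
  -- orthogonality of additive characters
  have htrne : ∃ z : K, Tr z ≠ 0 := by
    by_contra hcon
    push_neg at hcon
    exact Algebra.trace_ne_zero (ZMod r) K (LinearMap.ext hcon)
  have hΨne1 : ∀ t : ZMod r, t ≠ 0 → Ψ t ≠ 1 := fun t ht =>
    hζ.pow_ne_one_of_pos_of_lt (ZMod.val_pos.mpr ht).ne' (ZMod.val_lt t)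
  have horth : ∀ d : K, d ≠ 0 → ∑ a : K, Ψ (Tr (a * d)) = 0 := by
    intro d hd
    obtain ⟨z, hz⟩ := htrne
    have hcd : Tr (z * d⁻¹ * d) ≠ 0 := by
      rwa [mul_assoc, inv_mul_cancel₀ hd, mul_one]
    set c := z * d⁻¹ with hc
    have hre : ∑ a : K, Ψ (Tr ((a + c) * d)) = ∑ a : K, Ψ (Tr (a * d)) :=
      Fintype.sum_equiv (Equiv.addRight c) _ _ (fun y => by simp)
    have hS : ∑ a : K, Ψ (Tr (a * d)) = Ψ (Tr (c * d)) * ∑ a : K, Ψ (Tr (a * d)) := by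
      conv_lhs => rw [← hre]
      rw [Finset.mul_sum]
      refine Finset.sum_congr rfl ?_
      intro a _
      rw [add_mul, _root_.map_add, hΨadd]
      exact mul_comm _ _
    have h4 : (Ψ (Tr (c * d)) - 1) * (∑ a : K, Ψ (Tr (a * d))) = 0 := by
      rw [sub_mul, one_mul, ← hS, sub_self]
    exact (mul_eq_zero.mp h4).resolve_left (sub_ne_zero.mpr (hΨne1 _ hcd))
  -- the eigenvector matrix
  set W : Matrix K K E := Matrix.of (fun x a => Ψ (Tr (a * x))) with hW
  set PE : Matrix K K E := P.map f with hPE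
  have hPapp : ∀ x j : K, P x j = φ (j - x) := by
    intro x j
    show (if j = x then 0 else φ (j - x)) = φ (j - x)
    by_cases h : j = x
    · simp [h, hφ0]
    · rw [if_neg h]
  have hPgW : PE * W = W * Matrix.diagonal gE := by
    ext x a
    rw [Matrix.mul_apply, Matrix.mul_diagonal]
    have e1 : ∀ j, PE x j * W j a = f (φ (j - x)) * Ψ (Tr (a * j)) := by
      intro j
      rw [hPE, Matrix.map_apply, hPapp]
      rfl
    calc (∑ j, PE x j * W j a) = ∑ j, f (φ (j - x)) * Ψ (Tr (a * j)) :=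
          Finset.sum_congr rfl (fun j _ => e1 j)
      _ = ∑ y, f (φ y) * Ψ (Tr (a * (y + x))) :=
          (Fintype.sum_equiv (Equiv.addRight x) _ _ (fun y => by
            simp [add_sub_cancel_right])).symm
      _ = ∑ y, f (φ y) * Ψ (Tr (a * y)) * Ψ (Tr (a * x)) := by
          refine Finset.sum_congr rfl ?_
          intro y _
          rw [mul_add, _root_.map_add, hΨadd]
          ring
      _ = W x a * gE a := by
          rw [← Finset.sum_mul, hgE]
          show (∑ y, f (φ y) * Ψ (Tr (a * y))) * Ψ (Tr (a * x))
              = Ψ (Tr (a * x)) * ∑ y, f (φ y) * Ψ (Tr (a * y))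
          ring
  set W' : Matrix K K E := Matrix.of (fun a x => Ψ (- Tr (a * x))) with hW'
  have hΨinv : ∀ t : ZMod r, Ψ t * Ψ (-t) = 1 := by
    intro t
    rw [← hΨadd, add_neg_cancel, hΨ0]
  have hWW' : W * W' = (((r : ℕ) ^ m : ℕ) : E) • (1 : Matrix K K E) := by
    ext x y
    rw [Matrix.mul_apply]
    by_cases hxy : x = y
    · subst hxy
      have hone : ∑ j, W x j * W' j x = ∑ _j : K, (1 : E) :=
        Finset.sum_congr rfl (fun a _ => hΨinv (Tr (a * x)))
      rw [hone]
      simp [Finset.card_univ, hK, Matrix.one_apply]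
    · have hterm : ∀ a : K, W x a * W' a y = Ψ (Tr (a * (x - y))) := by
        intro a
        show Ψ (Tr (a * x)) * Ψ (- Tr (a * y)) = _
        rw [← hΨadd]
        congr 1
        rw [mul_sub, _root_.map_sub]
        ring
      have hsum : ∑ j, W x j * W' j y = ∑ a : K, Ψ (Tr (a * (x - y))) :=
        Finset.sum_congr rfl (fun a _ => hterm a)
      rw [hsum, horth _ (sub_ne_zero.mpr hxy)]
      simp [Matrix.one_apply, hxy]
  have hcardE : (((r : ℕ) ^ m : ℕ) : E) ≠ 0 := by
    push_cast
    exact pow_ne_zero _ hrE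
  have hdetW : W.det ≠ 0 := by
    intro h0
    have hd := congrArg Matrix.det hWW'
    rw [Matrix.det_mul, h0, zero_mul, Matrix.det_smul, Matrix.det_one, mul_one] at hd
    exact (pow_ne_zero (Fintype.card K) hcardE) hd.symm
  -- the Gram matrix
  have hPT : Pᵀ = φ (-1) • P := by
    ext i j
    rw [Matrix.transpose_apply, Matrix.smul_apply, hPapp, hPapp, smul_eq_mul, ← _root_.map_mul]
    congr 1
    ring
  have hGG : G * Gᵀ = (1 : Matrix K K F) + φ (-1) • (P * P) := by
    show Matrix.fromCols 1 P * (Matrix.fromCols 1 P)ᵀ = _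
    rw [Matrix.transpose_fromCols, Matrix.fromCols_mul_fromRows, Matrix.transpose_one,
      mul_one, hPT, Matrix.mul_smul]
  set M : Matrix K K F := (1 : Matrix K K F) + φ (-1) • (P * P) with hM
  have hME : M.map f = 1 + f (φ (-1)) • (PE * PE) := by
    ext i j
    simp [hM, Matrix.map_apply, Matrix.add_apply, Matrix.smul_apply, Matrix.one_apply,
      Matrix.mul_apply, _root_.map_sum, _root_.map_mul, apply_ite f, _root_.map_zero, _root_.map_one, smul_eq_mul,
      Finset.mul_sum, hPE]
  have hMW : M.map f * W = W * Matrix.diagonal (fun a => 1 + f (φ (-1)) * gE a ^ 2) := by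
    have hD : Matrix.diagonal (fun a => 1 + f (φ (-1)) * gE a ^ 2)
        = 1 + f (φ (-1)) • (Matrix.diagonal gE * Matrix.diagonal gE) := by
      rw [Matrix.diagonal_mul_diagonal]
      ext i j
      by_cases h : i = j
      · subst h
        simp [Matrix.diagonal_apply_eq, Matrix.one_apply, sq]
      · simp [Matrix.diagonal_apply_ne _ h, Matrix.one_apply, h]
    rw [hME, hD, add_mul, one_mul, mul_add, mul_one, Matrix.smul_mul, Matrix.mul_smul]
    congr 1
    rw [mul_assoc, hPgW, ← mul_assoc, hPgW, mul_assoc]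
  have hdetprod : (M.map f).det = ∏ a : K, (1 + f (φ (-1)) * gE a ^ 2) := by
    have hd := congrArg Matrix.det hMW
    rw [Matrix.det_mul, Matrix.det_mul, Matrix.det_diagonal, mul_comm W.det] at hd
    exact mul_right_cancel₀ hdetW hd
  have hdetM : M.det ≠ 0 := by
    intro h0
    have h1 : (M.map f).det = 0 := by
      rw [show M.map f = f.mapMatrix M from rfl, ← RingHom.map_det, h0, _root_.map_zero]
    rw [hdetprod] at h1
    obtain ⟨a, _, ha⟩ := Finset.prod_eq_zero_iff.mp h1
    exact key1all a (by linear_combination ha)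
  have hMunit : IsUnit M.det := isUnit_iff_ne_zero.mpr hdetM
  refine ⟨?_, ?_, ?_⟩
  · intro a _
    rw [hg]
    exact key1all a
  · rw [eq_bot_iff]
    rintro v ⟨hv1, hv2⟩
    obtain ⟨c, hc⟩ := (Submodule.mem_span_range_iff_exists_fun F).mp hv1
    have hdot : ∀ j : K, dotProduct (G j) v = 0 := fun j =>
      hv2 (G j) (Submodule.subset_span ⟨j, rfl⟩)
    have hMc : (G * Gᵀ) *ᵥ c = 0 := by
      ext j
      have h2 := hdot j
      rw [← hc] at h2
      rw [Matrix.mulVec, Pi.zero_apply, ← h2]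
      show dotProduct ((G * Gᵀ) j) c = _
      simp only [dotProduct, Matrix.mul_apply, Matrix.transpose_apply,
        Finset.sum_apply, Pi.smul_apply, smul_eq_mul, Finset.sum_mul, Finset.mul_sum]
      rw [Finset.sum_comm]
      exact Finset.sum_congr rfl fun k _ => Finset.sum_congr rfl fun i _ => by ring
    have hMc' : M *ᵥ c = 0 := by rw [← hGG]; exact hMc
    have hc0 : c = 0 := by
      have hinv := Matrix.nonsing_inv_mul M hMunit
      calc c = (1 : Matrix K K F) *ᵥ c := (Matrix.one_mulVec c).symm
        _ = (M⁻¹ * M) *ᵥ c := by rw [hinv]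
        _ = M⁻¹ *ᵥ (M *ᵥ c) := by rw [← Matrix.mulVec_mulVec]
        _ = 0 := by rw [hMc', Matrix.mulVec_zero]
    rw [Submodule.mem_bot, ← hc, hc0]
    simp
  · have hLI : LinearIndependent F (fun i => G i) := by
      rw [Fintype.linearIndependent_iff]
      intro c hc j
      have h1 := congrFun hc (Sum.inl j)
      simp only [Finset.sum_apply, Pi.smul_apply, smul_eq_mul, Pi.zero_apply] at h1
      simp only [show ∀ i : K, G i (Sum.inl j) = (1 : Matrix K K F) i j from fun i => rfl] at h1
      simpa [Matrix.one_apply, mul_ite, mul_one, mul_zero, Finset.sum_ite_eq'] using h1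
    rw [show (r ^ m) = Fintype.card K from hK.symm]
    exact finrank_span_eq_card hLI
end

section
/- Suppose N | (r^m − 1), N | (q − 1), gcd(p,r) = 1, there exists a positive integer s with N | (p^s + 1), and φ(p^{−2s}) ≠ r^{2m} (as elements of F_q). Then for all a ∈ F_{r^m}^*, φ(−1)·(g(φ, χ_a))² ≠ −1; consequently the code with generator matrix [I_{r^m} | P] (diagonal of P equal to 0) is a [2r^m, r^m] LCD code over F_q. -/
open Finset Matrix

private lemma gauss_pow_char_pow {R : Type*} [CommRing R] [Fintype R] {R' : Type*} [CommRing R']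
    (p : ℕ) [Fact p.Prime] [CharP R' p] (χ : MulChar R R') (ψ : AddChar R R') (s : ℕ) :
    gaussSum χ ψ ^ (p ^ s) = gaussSum (χ ^ (p ^ s)) (ψ ^ (p ^ s)) := by
  induction s with
  | zero => simp
  | succ n ih =>
      rw [pow_succ, pow_mul, ih, gaussSum_frob, ← pow_mul, ← pow_mul]

private lemma gaussSum_mulShift_neg {R : Type*} [CommRing R] [Fintype R] {R' : Type*}
    [CommRing R'] (χ : MulChar R R') (ψ : AddChar R R') (a : R) :
    gaussSum χ (AddChar.mulShift ψ (-a)) = χ (-1) * gaussSum χ (AddChar.mulShift ψ a) := by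
  simp only [gaussSum, AddChar.mulShift_apply, Finset.mul_sum]
  refine Fintype.sum_bijective (fun x => -x) neg_involutive.bijective _ _ fun x => ?_
  rw [← mul_assoc, ← _root_.map_mul, neg_one_mul, neg_neg]
  congr 2
  ring

/-- if `N ∣ r^m - 1`, `N ∣ q - 1`, `gcd (p, r) = 1`, `N ∣ p^s + 1` for some
`s ≥ 1` and `φ (p^{-2s}) ≠ r^{2m}` in `F_q`, where `φ` is the order-`N` multiplicative
character of `F_{r^m}` determined by `φ (α^k) = u^k`, then `φ(-1) g(φ, χ_a)² ≠ -1` for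
every `a ≠ 0`, and the code with generator matrix `[I | P]` (diagonal of `P` zero) is a
`[2 r^m, r^m]` LCD code over `F_q`. -/
theorem lcd_construction_A_case2 {r m p e q N : ℕ} [Fact r.Prime] (hm : 0 < m)
    (hp : p.Prime) (he : 0 < e) (hq : q = p ^ e) (hpr : Nat.Coprime p r)
    (hN : 1 < N) (hNr : N ∣ r ^ m - 1) (hNq : N ∣ q - 1)
    {K F E : Type*} [Field K] [Fintype K] [DecidableEq K] [Algebra (ZMod r) K]
    (hK : Fintype.card K = r ^ m)
    [Field F] [Fintype F] [CharP F p] (hF : Fintype.card F = q)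
    [Field E] [CharP E p] [IsAlgClosed E] [Algebra F E]
    (ζ : E) (hζ : IsPrimitiveRoot ζ r)
    (α : Kˣ) (hα : ∀ x : Kˣ, x ∈ Subgroup.zpowers α)
    (u : F) (hu : orderOf u = N)
    (φ : MulChar K F) (hφ : ∀ k : ℕ, φ ((α ^ k : Kˣ) : K) = u ^ k)
    (s : ℕ) (hs : 0 < s) (hNs : N ∣ p ^ s + 1)
    (hp2s : φ (((p : K) ^ (2 * s))⁻¹) ≠ (r : F) ^ (2 * m)) :
    let g : K → E := fun a =>
      ∑ x ∈ univ \ {0},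
        algebraMap F E (φ x) * ζ ^ (Algebra.trace (ZMod r) K (a * x)).val
    let P : Matrix K K F := Matrix.of fun i j => if j = i then 0 else φ (j - i)
    let G := Matrix.fromCols (1 : Matrix K K F) P
    let C := Submodule.span F (Set.range fun i => G i)
    (∀ a : K, a ≠ 0 → algebraMap F E (φ (-1)) * (g a) ^ 2 ≠ -1) ∧
      C ⊓ dualCode C = ⊥ ∧ Module.finrank F C = r ^ m := by
  intro g P G C
  have hr : r.Prime := Fact.out
  haveI : Fact p.Prime := ⟨hp⟩
  haveI : NeZero r := ⟨hr.pos.ne'⟩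
  haveI : Fact (1 < r) := ⟨hr.one_lt⟩
  haveI : CharP K r := charP_of_injective_ringHom (algebraMap (ZMod r) K).injective r
  -- basic nonvanishing facts
  have hpK : (p : K) ≠ 0 := by
    rw [Ne, CharP.cast_eq_zero_iff K r]
    intro hdvd
    have h1 : r ∣ Nat.gcd p r := Nat.dvd_gcd hdvd dvd_rfl
    rw [hpr] at h1
    exact hr.one_lt.ne' (Nat.dvd_one.mp h1)
  have hrE : (r : E) ≠ 0 := by
    rw [Ne, CharP.cast_eq_zero_iff E p]
    intro hdvd
    have h1 : p ∣ Nat.gcd p r := Nat.dvd_gcd dvd_rfl hdvd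
    rw [hpr] at h1
    exact hp.one_lt.ne' (Nat.dvd_one.mp h1)
  have halg : Function.Injective (algebraMap F E) := (algebraMap F E).injective
  -- the characters
  set χ : MulChar K E := φ.ringHomComp (algebraMap F E) with hχdef
  have hζr : ζ ^ r = 1 := hζ.pow_eq_one
  set ψ : AddChar K E :=
    (AddChar.zmodChar r hζr).compAddMonoidHom (Algebra.trace (ZMod r) K).toAddMonoidHom with hψdef
  have hψeq : ∀ x : K, ψ x = ζ ^ (Algebra.trace (ZMod r) K x).val := fun x => rfl
  have hχc : ∀ x : K, χ x = algebraMap F E (φ x) := fun _ => rfl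
  -- `g` is a Gauss sum
  have hg : ∀ a : K, g a = gaussSum χ (ψ.mulShift a) := by
    intro a
    show (∑ x ∈ univ \ {0},
        algebraMap F E (φ x) * ζ ^ (Algebra.trace (ZMod r) K (a * x)).val) = _
    rw [gaussSum, sum_eq_sum_sdiff_singleton_add (mem_univ (0 : K)), χ.map_zero, zero_mul,
      add_zero]
    rfl
  -- nontriviality of the characters
  have hχ1 : χ ≠ 1 := by
    intro h
    have h1 : χ ((α : Kˣ) : K) = 1 := by rw [h]; exact MulChar.one_apply_coe α
    rw [hχc] at h1
    have h2 : φ ((α : Kˣ) : K) = u := by simpa using hφ 1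
    rw [h2, ← _root_.map_one (algebraMap F E)] at h1
    have : u = 1 := halg h1
    rw [this, orderOf_one] at hu
    omega
  have hψ1 : ψ ≠ 1 := by
    obtain ⟨x, hx⟩ := Algebra.trace_surjective (ZMod r) K 1
    intro h
    have h1 : ψ x = 1 := by rw [h]; rfl
    rw [hψeq, hx, ZMod.val_one, pow_one] at h1
    exact hζ.ne_one hr.one_lt h1
  have hψprim : ψ.IsPrimitive := AddChar.IsPrimitive.of_ne_one hψ1
  -- values of φ on units are powers of u
  have hφu : ∀ x : Kˣ, ∃ k : ℕ, φ (x : K) = u ^ k := by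
    intro x
    obtain ⟨k, hk⟩ := mem_powers_iff_mem_zpowers.mpr (hα x)
    exact ⟨k, by rw [← hk]; exact hφ k⟩
  have hu1 : u ^ (p ^ s + 1) = 1 := orderOf_dvd_iff_pow_eq_one.mp (hu ▸ hNs)
  have hχpow : ∀ x : Kˣ, χ ((x : Kˣ) : K) ^ (p ^ s + 1) = 1 := by
    intro x
    obtain ⟨k, hk⟩ := hφu x
    rw [hχc, ← _root_.map_pow, hk, ← pow_mul, mul_comm k, pow_mul, hu1, one_pow, _root_.map_one]
  have hχinv : χ ^ (p ^ s) = χ⁻¹ := by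
    apply MulChar.ext
    intro x
    rw [MulChar.pow_apply_coe, MulChar.inv_apply_eq_inv']
    refine eq_inv_of_mul_eq_one_left ?_
    rw [← pow_succ]
    exact hχpow x
  -- the basic Gauss sum and the semiprimitive identity
  set g0 : E := gaussSum χ ψ with hg0def
  set cK : K := (p : K) ^ s with hcKdef
  have hcK0 : cK ≠ 0 := pow_ne_zero _ hpK
  have hfrob : g0 ^ (p ^ s) = gaussSum χ⁻¹ (ψ.mulShift cK) := by
    rw [hg0def, gauss_pow_char_pow p χ ψ s, hχinv, AddChar.pow_mulShift]
    norm_num [hcKdef]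
  have hshift : χ⁻¹ cK * gaussSum χ⁻¹ (ψ.mulShift cK) = gaussSum χ⁻¹ ψ := by
    have := gaussSum_mulShift χ⁻¹ ψ (Units.mk0 cK hcK0)
    simpa using this
  have hmain : g0 * gaussSum χ⁻¹ ψ = χ⁻¹ (-1) * (Fintype.card K : E) := by
    have h1 := gaussSum_mul_gaussSum_eq_card hχ1 hψprim
    have h2 := mul_gaussSum_inv_eq_gaussSum χ⁻¹ ψ
    rw [← h2, mul_left_comm, h1]
  have key : g0 ^ (p ^ s + 1) * χ⁻¹ cK = χ⁻¹ (-1) * (Fintype.card K : E) := by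
    calc g0 ^ (p ^ s + 1) * χ⁻¹ cK = g0 * (χ⁻¹ cK * g0 ^ (p ^ s)) := by ring
      _ = g0 * (χ⁻¹ cK * gaussSum χ⁻¹ (ψ.mulShift cK)) := by rw [hfrob]
      _ = g0 * gaussSum χ⁻¹ ψ := by rw [hshift]
      _ = _ := hmain
  -- auxiliary computations for squaring
  have hinv1sq : χ⁻¹ (-1 : K) * χ⁻¹ (-1 : K) = 1 := by
    rw [← _root_.map_mul, neg_one_mul, neg_neg, MulChar.map_one]
  have hneg1 : (-1 : E) ^ (p ^ s + 1) = 1 := by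
    rcases hp.eq_two_or_odd' with h2 | hodd
    · subst h2
      haveI : CharP E 2 := by assumption
      rw [show (-1 : E) = 1 from CharTwo.neg_eq 1, one_pow]
    · exact Even.neg_one_pow (Odd.add_one (hodd.pow))
  have hcardE : ((Fintype.card K : ℕ) : E) = algebraMap F E ((r : F) ^ m) := by
    rw [hK]
    push_cast [_root_.map_pow, _root_.map_natCast]
    ring
  -- Part 1
  have part1 : ∀ a : K, a ≠ 0 → algebraMap F E (φ (-1)) * (g a) ^ 2 ≠ -1 := by
    intro a ha hcon
    rw [hg a] at hcon
    have hχm1 : algebraMap F E (φ (-1)) = χ (-1 : K) := rfl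
    rw [hχm1] at hcon
    have hga : χ a * gaussSum χ (ψ.mulShift a) = g0 := by
      have := gaussSum_mulShift χ ψ (Units.mk0 a ha)
      simpa using this
    have hg0sq : χ (-1 : K) * g0 ^ 2 = -(χ a ^ 2) := by
      rw [← hga, mul_pow]
      linear_combination (χ a ^ 2) * hcon
    have hx1 : χ (-1 : K) ^ (p ^ s + 1) = 1 := by
      have := hχpow (-1)
      simpa using this
    have hxa : χ a ^ (p ^ s + 1) = 1 := by
      have := hχpow (Units.mk0 a ha)
      simpa using this
    have hg02n : g0 ^ (2 * (p ^ s + 1)) = 1 := by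
      have hpow := congrArg (· ^ (p ^ s + 1)) hg0sq
      simp only [mul_pow] at hpow
      rw [hx1, one_mul] at hpow
      calc g0 ^ (2 * (p ^ s + 1)) = (g0 ^ 2) ^ (p ^ s + 1) := by rw [← pow_mul, mul_comm]
        _ = (-(χ a ^ 2)) ^ (p ^ s + 1) := hpow
        _ = (-1) ^ (p ^ s + 1) * ((χ a) ^ (p ^ s + 1)) ^ 2 := by
            rw [neg_pow, ← pow_mul, ← pow_mul, mul_comm 2]
        _ = 1 := by rw [hneg1, hxa, one_pow, one_mul]
    have key2 : (χ⁻¹ cK) ^ 2 = algebraMap F E ((r : F) ^ m) ^ 2 := by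
      have h := congrArg (· ^ 2) key
      simp only [mul_pow] at h
      rw [← pow_mul, mul_comm (p ^ s + 1) 2, hg02n, one_mul] at h
      rw [show (χ⁻¹ (-1 : K)) ^ 2 = 1 by rw [sq]; exact hinv1sq, one_mul, hcardE] at h
      exact h
    have hinvχ : χ⁻¹ = φ⁻¹.ringHomComp (algebraMap F E) := by
      rw [hχdef, MulChar.ringHomComp_inv]
    have hinvc : χ⁻¹ cK = algebraMap F E (φ⁻¹ cK) := by rw [hinvχ]; rfl
    have hc2 : ((p : K) ^ (2 * s))⁻¹ = (cK⁻¹) ^ 2 := by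
      rw [hcKdef, inv_pow, ← pow_mul, mul_comm s 2]
    have hFside : φ (((p : K) ^ (2 * s))⁻¹) = φ⁻¹ cK ^ 2 := by
      rw [hc2, _root_.map_pow, MulChar.inv_apply' φ cK]
    apply hp2s
    apply halg
    rw [hFside, _root_.map_pow, ← hinvc, key2, ← _root_.map_pow]
    congr 1
    rw [← pow_mul, mul_comm m 2]
  refine ⟨part1, ?_, ?_⟩
  · -- LCD property
    classical
    set f : F →+* E := algebraMap F E with hfdef
    set P' : Matrix K K E := P.map f with hP'def
    have hPdef : ∀ i j, P i j = if j = i then 0 else φ (j - i) := fun i j => rfl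
    have hP' : ∀ i j, P' i j = χ (j - i) := by
      intro i j
      rw [hP'def, Matrix.map_apply, hPdef]
      by_cases h : j = i
      · rw [if_pos h, h, sub_self, χ.map_zero, _root_.map_zero]
      · rw [if_neg h]; rfl
    set V : Matrix K K E := Matrix.of fun i a => ψ (a * i) with hVdef
    set d : K → E := fun a => gaussSum χ (ψ.mulShift a) with hddef
    have hPV : P' * V = V * Matrix.diagonal d := by
      ext i a
      rw [Matrix.mul_apply, Matrix.mul_diagonal, hVdef]
      simp only [Matrix.of_apply]
      have hterm : ∀ j, P' i j * ψ (a * j) = χ (j - i) * ψ (a * j) := fun j => by rw [hP']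
      rw [Finset.sum_congr rfl fun j _ => hterm j]
      have hre : (∑ j, χ (j - i) * ψ (a * j)) = ∑ t, (χ t * ψ (a * t)) * ψ (a * i) := by
        refine Fintype.sum_equiv (Equiv.subRight i) _ _ fun j => ?_
        simp only [Equiv.subRight_apply]
        rw [mul_assoc, ← AddChar.map_add_eq_mul, ← mul_add, sub_add_cancel]
      rw [hre, ← Finset.sum_mul, hddef]
      simp only [gaussSum, AddChar.mulShift_apply]
      ring
    have hPtV : P'ᵀ * V = V * Matrix.diagonal fun a => χ (-1 : K) * d a := by
      ext i a
      rw [Matrix.mul_apply, Matrix.mul_diagonal, hVdef]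
      simp only [Matrix.of_apply]
      have hterm : ∀ j, P'ᵀ i j * ψ (a * j) = χ (i - j) * ψ (a * j) := fun j => by
        rw [Matrix.transpose_apply, hP']
      rw [Finset.sum_congr rfl fun j _ => hterm j]
      have hre : (∑ j, χ (i - j) * ψ (a * j)) = ∑ t, (χ t * ψ (-a * t)) * ψ (a * i) := by
        refine Fintype.sum_equiv (Equiv.subLeft i) _ _ fun j => ?_
        simp only [Equiv.subLeft_apply]
        rw [mul_assoc, ← AddChar.map_add_eq_mul]
        congr 1
        congr 1
        ring
      rw [hre, ← Finset.sum_mul]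
      have hgs : (∑ t, χ t * ψ (-a * t)) = gaussSum χ (ψ.mulShift (-a)) := by
        simp [gaussSum]
      rw [hgs, gaussSum_mulShift_neg, hddef]
      ring
    have hMV : (1 + P' * P'ᵀ) * V =
        V * Matrix.diagonal fun a => 1 + χ (-1 : K) * d a ^ 2 := by
      calc (1 + P' * P'ᵀ) * V = V + P' * (P'ᵀ * V) := by
            rw [Matrix.add_mul, Matrix.one_mul, Matrix.mul_assoc]
        _ = V + (P' * V) * Matrix.diagonal (fun a => χ (-1 : K) * d a) := by
            rw [hPtV, Matrix.mul_assoc]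
        _ = V + V * (Matrix.diagonal d * Matrix.diagonal fun a => χ (-1 : K) * d a) := by
            rw [hPV, Matrix.mul_assoc]
        _ = V * Matrix.diagonal fun a => 1 + χ (-1 : K) * d a ^ 2 := by
            rw [Matrix.diagonal_mul_diagonal]
            have h1 : (fun a => d a * (χ (-1 : K) * d a)) = fun a => χ (-1 : K) * d a ^ 2 :=
              funext fun a => by ring
            rw [h1, ← Matrix.diagonal_add, Matrix.mul_add,
              show Matrix.diagonal (fun _ => (1 : E)) = (1 : Matrix K K E) from Matrix.diagonal_one,
              Matrix.mul_one]
    -- V is invertible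
    set U : Matrix K K E := Matrix.of fun a i => ψ (-(a * i)) with hUdef
    have hUV : U * V = (Fintype.card K : E) • (1 : Matrix K K E) := by
      ext a b
      simp only [Matrix.mul_apply, Matrix.smul_apply, Matrix.one_apply, hUdef, hVdef,
        Matrix.of_apply]
      have hterm : ∀ i : K, ψ (-(a * i)) * ψ (b * i) = ψ (i * (b - a)) := by
        intro i
        rw [← AddChar.map_add_eq_mul]
        congr 1
        ring
      rw [Finset.sum_congr rfl fun i _ => hterm i, AddChar.sum_mulShift _ hψprim]
      simp only [sub_eq_zero]
      rcases eq_or_ne a b with h | h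
      · subst h
        simp
      · rw [if_neg (Ne.symm h), if_neg h, smul_zero, Nat.cast_zero]
    have hVdet : V.det ≠ 0 := by
      have h := congrArg Matrix.det hUV
      rw [Matrix.det_mul, Matrix.det_smul, Matrix.det_one, mul_one] at h
      have hq : ((Fintype.card K : ℕ) : E) ≠ 0 := by
        rw [hK]; push_cast; exact pow_ne_zero _ hrE
      intro h0
      rw [h0, mul_zero] at h
      exact pow_ne_zero _ hq h.symm
    -- determinant over E
    have hdetE : (1 + P' * P'ᵀ).det = ∏ a, (1 + χ (-1 : K) * d a ^ 2) := by
      have h := congrArg Matrix.det hMV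
      rw [Matrix.det_mul, Matrix.det_mul, mul_comm V.det] at h
      have h2 := mul_right_cancel₀ hVdet h
      rw [h2, Matrix.det_diagonal]
    have hfac : ∀ a : K, 1 + χ (-1 : K) * d a ^ 2 ≠ 0 := by
      intro a
      by_cases ha : a = 0
      · subst ha
        have hd0 : d 0 = 0 := by
          rw [hddef]
          show gaussSum χ (ψ.mulShift 0) = 0
          rw [AddChar.mulShift_zero, gaussSum]
          simpa using χ.sum_eq_zero_of_ne_one hχ1
        rw [hd0]
        norm_num
      · intro h0
        apply part1 a ha
        rw [hg a]
        show χ (-1 : K) * d a ^ 2 = -1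
        linear_combination h0
    have hdetE0 : (1 + P' * P'ᵀ).det ≠ 0 := by
      rw [hdetE]
      exact Finset.prod_ne_zero_iff.mpr fun a _ => hfac a
    -- back to F
    have hmap : (1 + P * Pᵀ).map f = 1 + P' * P'ᵀ := by
      rw [← RingHom.mapMatrix_apply, _root_.map_add, _root_.map_one, _root_.map_mul, RingHom.mapMatrix_apply,
        RingHom.mapMatrix_apply, Matrix.transpose_map, hP'def]
    have hdetF : (1 + P * Pᵀ).det ≠ 0 := by
      intro h0
      apply hdetE0
      rw [← hmap, ← RingHom.mapMatrix_apply, ← RingHom.map_det, h0, _root_.map_zero]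
    have hGG : G * Gᵀ = 1 + P * Pᵀ := by
      show Matrix.fromCols 1 P * (Matrix.fromCols 1 P)ᵀ = _
      rw [Matrix.transpose_fromCols, Matrix.transpose_one, Matrix.fromCols_mul_fromRows,
        Matrix.one_mul]
    have hUnit : IsUnit (G * Gᵀ) := by
      rw [hGG]
      exact (Matrix.isUnit_iff_isUnit_det _).mpr (isUnit_iff_ne_zero.mpr hdetF)
    rw [eq_bot_iff]
    rintro v hv
    obtain ⟨hv1, hv2⟩ := Submodule.mem_inf.mp hv
    have hv1' : v ∈ Submodule.span F (Set.range fun i => G i) := hv1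
    obtain ⟨x, hx⟩ := (Submodule.mem_span_range_iff_exists_fun F).mp hv1'
    have hrow : ∀ i, dotProduct (G i) v = 0 := fun i =>
      hv2 (G i) (Submodule.subset_span ⟨i, rfl⟩)
    have hvj : ∀ j, v j = ∑ k, x k * G k j := by
      intro j
      rw [← hx]
      simp
    have hsum : (G * Gᵀ) *ᵥ x = 0 := by
      funext i
      have hcalc : ((G * Gᵀ) *ᵥ x) i = ∑ j, G i j * v j := by
        simp only [Matrix.mulVec, dotProduct, Matrix.mul_apply, Matrix.transpose_apply]
        simp_rw [hvj, Finset.sum_mul, Finset.mul_sum]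
        rw [Finset.sum_comm]
        exact Finset.sum_congr rfl fun j _ => Finset.sum_congr rfl fun k _ => by ring
      rw [Pi.zero_apply, hcalc]
      exact hrow i
    have hxz : x = 0 := by
      have hinj := Matrix.mulVec_injective_iff_isUnit.mpr hUnit
      apply hinj
      rw [hsum, Matrix.mulVec_zero]
    rw [← hx, hxz]
    simp
  · -- finrank
    have hli : LinearIndependent F fun i => G i := by
      rw [Fintype.linearIndependent_iff]
      intro c hc i
      have h1 : (∑ k, c k • G k) (Sum.inl i) = 0 := by rw [hc]; rfl
      have h1' : ∑ k, c k * (1 : Matrix K K F) k i = 0 := by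
        rw [← h1, Finset.sum_apply]
        exact Finset.sum_congr rfl fun k _ => rfl
      simpa [Matrix.one_apply] using h1'
    have hfr := finrank_span_eq_card (R := F) hli
    rw [hK] at hfr
    exact hfr
end

section
/- Let p = 2, q a power of 2 with N | (q−1), N | (r^m − 1), r an odd prime. Let P be the r^m × r^m matrix with p_{ij} = φ(x_j − x_i) for i ≠ j and p_{ii} = 1. Then the eigenvalues of P P^T are λ_0 = −1 (= 1) with multiplicity one (for a = 0), and λ_a = −1 + (g(φ,χ_a))² ≠ −1 for a ∈ F_{r^m}^*; consequently the [2r^m, r^m] code with generator matrix [I_{r^m} | P] over F_q has one-dimensional hull. -/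
open Finset

open Matrix AddChar in
private lemma auxSumShift {K E : Type*} [Field K] [Fintype K] [DecidableEq K] [Field E]
    (χ : MulChar K E) (ψ : AddChar K E) (a i : K) :
    ∑ j, χ (j - i) * ψ (a * j) = gaussSum χ (ψ.mulShift a) * ψ (a * i) := by
  rw [← Fintype.sum_equiv (Equiv.addLeft i) (fun y => χ y * ψ (a * (i + y)))
    (fun j => χ (j - i) * ψ (a * j)) (fun y => by simp [add_sub_cancel_left]),
    gaussSum, Finset.sum_mul]
  refine Finset.sum_congr rfl fun y _ => ?_
  simp only [mul_add, map_add_eq_mul, mulShift_apply]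
  ring

open Matrix AddChar in
private lemma auxSumShift' {K E : Type*} [Field K] [Fintype K] [DecidableEq K] [Field E]
    (χ : MulChar K E) (hneg : χ (-1) = 1) (ψ : AddChar K E) (a i : K) :
    ∑ j, χ (i - j) * ψ (a * j) = gaussSum χ (ψ.mulShift a) * ψ (a * i) := by
  have h1 : ∀ j : K, χ (i - j) = χ (j - i) := fun j => by
    have h : i - j = -1 * (j - i) := by ring
    rw [h, _root_.map_mul, hneg, one_mul]
  simp_rw [h1]
  exact auxSumShift χ ψ a i

open Matrix AddChar in
private lemma auxEigen {K E : Type*} [Field K] [Fintype K] [DecidableEq K] [Field E] [CharP E 2]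
    (χ : MulChar K E) (hneg : χ (-1) = 1) (ψ : AddChar K E) (a : K) :
    ((1 + Matrix.of fun i j : K => χ (j - i)) *
        (1 + Matrix.of fun i j : K => χ (j - i))ᵀ).mulVec (fun x => ψ (a * x)) =
      (1 + gaussSum χ (ψ.mulShift a) ^ 2) • fun x => ψ (a * x) := by
  set A : Matrix K K E := Matrix.of fun i j : K => χ (j - i) with hA
  set v : K → E := fun x => ψ (a * x) with hv
  set c := gaussSum χ (ψ.mulShift a) with hc
  have hAv : A *ᵥ v = c • v := by
    funext i
    show ∑ j, A i j * v j = c * v i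
    exact auxSumShift χ ψ a i
  have hATv : Aᵀ *ᵥ v = c • v := by
    funext i
    show ∑ j, A j i * v j = c * v i
    exact auxSumShift' χ hneg ψ a i
  have expand : (1 + A) * (1 + A)ᵀ = 1 + (Aᵀ + (A + A * Aᵀ)) := by
    rw [transpose_add, transpose_one]; noncomm_ring
  rw [expand, add_mulVec, one_mulVec, add_mulVec, add_mulVec, ← mulVec_mulVec, hATv, hAv,
    mulVec_smul, hAv]
  have h2 : (2 : E) = 0 := by exact_mod_cast CharP.cast_eq_zero E 2
  funext x
  simp only [Pi.add_apply, Pi.smul_apply, smul_eq_mul]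
  linear_combination (c * v x) * h2

private lemma mapMulVec {K F E : Type*} [Fintype K] [Semiring F] [Semiring E]
    (f : F →+* E) (Q : Matrix K K F) (v : K → F) :
    (Q.map f).mulVec (fun x => f (v x)) = fun i => f (Q.mulVec v i) := by
  funext i
  simp only [Matrix.mulVec, dotProduct, Matrix.map_apply, map_sum]
  exact Finset.sum_congr rfl fun j _ => (map_mul f _ _).symm

private lemma charTwoSqOne {E : Type*} [Field E] [CharP E 2] {x : E} (h : x ^ 2 = 1) :
    x = 1 := by
  have h2 : (2 : E) = 0 := by
    have := CharP.cast_eq_zero E 2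
    exact_mod_cast this
  have hx : (x + 1) ^ 2 = 0 := by linear_combination h + x * h2 + h2
  have := pow_eq_zero_iff (by norm_num : 2 ≠ 0) |>.mp hx
  linear_combination this - h2

/-- `q` a power of `2`, `r` an odd prime, `N ∣ q - 1`, `N ∣ r^m - 1`, and
`P` the `r^m × r^m` matrix with `p_{ij} = φ(x_j - x_i)` off the diagonal and `1` on the
diagonal.  Then the eigenvalues of `P Pᵀ` are `λ_0 = -1` (for `a = 0`) and
`λ_a = -1 + g(φ,χ_a)² ≠ -1` for `a ≠ 0`; consequently the `[2 r^m, r^m]` code with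
generator matrix `[I | P]` over `F_q` has one-dimensional hull. -/
theorem one_dim_hull_char_two {r m e q N : ℕ} [Fact r.Prime] (hrodd : r ≠ 2)
    (hm : 0 < m) (he : 0 < e) (hq : q = 2 ^ e)
    (hN : 1 < N) (hNr : N ∣ r ^ m - 1) (hNq : N ∣ q - 1)
    {K F E : Type*} [Field K] [Fintype K] [DecidableEq K] [Algebra (ZMod r) K]
    (hK : Fintype.card K = r ^ m)
    [Field F] [Fintype F] [CharP F 2] (hF : Fintype.card F = q)
    [Field E] [CharP E 2] [IsAlgClosed E] [Algebra F E]
    (ζ : E) (hζ : IsPrimitiveRoot ζ r)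
    (φ : MulChar K F) (hord : orderOf φ = N) :
    let η : K → K → E := fun a x => ζ ^ (Algebra.trace (ZMod r) K (a * x)).val
    let g : K → E := fun a =>
      ∑ x ∈ univ \ {0},
        algebraMap F E (φ x) * ζ ^ (Algebra.trace (ZMod r) K (a * x)).val
    let P : Matrix K K F := Matrix.of fun i j => if j = i then 1 else φ (j - i)
    let G := Matrix.fromCols (1 : Matrix K K F) P
    let C := Submodule.span F (Set.range fun i => G i)
    let M := (P * P.transpose).map (algebraMap F E)
    (M.mulVec (η 0) = (-1 : E) • η 0) ∧
      (∀ a : K, a ≠ 0 → M.mulVec (η a) = (-1 + (g a) ^ 2) • η a ∧ -1 + (g a) ^ 2 ≠ (-1 : E)) ∧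
      Module.finrank F ↥(C ⊓ dualCode C) = 1 := by
  intro η g P G C M
  have hrp : r.Prime := Fact.out
  haveI : NeZero r := ⟨hrp.ne_zero⟩
  set f : F →+* E := (algebraMap F E : F →+* E) with hf
  have hfinj : Function.Injective f := f.injective
  set χ : MulChar K E := φ.ringHomComp f with hχ
  set T : K →+ ZMod r := (Algebra.trace (ZMod r) K).toAddMonoidHom with hT
  set ψ0 : AddChar (ZMod r) E := AddChar.zmodChar r hζ.pow_eq_one with hψ0
  set ψ : AddChar K E := ψ0.compAddMonoidHom T with hψ
  -- η in terms of ψ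
  have hη : ∀ a x : K, η a x = ψ (a * x) := fun a x => rfl
  -- χ(-1) = 1
  have hneg : χ (-1) = 1 := by
    apply charTwoSqOne
    rw [pow_two, ← map_mul, neg_mul_neg, one_mul, MulChar.map_one]
  -- χ ≠ 1
  have hχne : χ ≠ 1 := by
    intro h
    have hφ1 : φ = 1 := by
      apply MulChar.ext
      intro u
      apply hfinj
      have := congrArg (fun ξ : MulChar K E => ξ (u : K)) h
      simpa [hχ, MulChar.ringHomComp_apply, MulChar.one_apply_coe] using this
    rw [hφ1, orderOf_one] at hord
    omega
  -- ψ primitive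
  have hψne : ψ ≠ 1 := by
    obtain ⟨x, hx⟩ := Algebra.trace_surjective (ZMod r) K 1
    intro h
    have hx1 : ψ x = ζ := by
      show ψ0 (T x) = ζ
      have : T x = 1 := hx
      rw [this]
      show ζ ^ (1 : ZMod r).val = ζ
      rw [ZMod.val_one_eq_one_mod]
      rw [Nat.mod_eq_of_lt hrp.one_lt, pow_one]
    rw [h] at hx1
    exact hζ.ne_one hrp.one_lt hx1.symm
  have hψprim : ψ.IsPrimitive := AddChar.IsPrimitive.of_ne_one hψne
  have hψashift : ∀ a : K, a ≠ 0 → (ψ.mulShift a).IsPrimitive := by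
    intro a ha b hb
    rw [AddChar.mulShift_mulShift]
    exact hψprim (mul_ne_zero ha hb)
  -- card K nonzero in E
  have hcardE : ((Fintype.card K : E)) ≠ 0 := by
    rw [hK]
    intro h0
    have h2 : (2 : ℕ) ∣ r ^ m := (CharP.cast_eq_zero_iff E 2 _).mp (by exact_mod_cast h0)
    have := (Nat.prime_dvd_prime_iff_eq Nat.prime_two hrp).mp (Nat.Prime.dvd_of_dvd_pow
      Nat.prime_two h2)
    exact hrodd this.symm
  -- gauss sums nonzero
  have hgnz : ∀ a : K, a ≠ 0 → gaussSum χ (ψ.mulShift a) ≠ 0 := by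
    intro a ha h0
    have := gaussSum_mul_gaussSum_eq_card hχne (hψashift a ha)
    rw [h0, zero_mul] at this
    exact hcardE this.symm
  -- g in terms of gaussSum
  have hgg : ∀ a : K, g a = gaussSum χ (ψ.mulShift a) := by
    intro a
    show (∑ x ∈ univ \ {0}, f (φ x) * ζ ^ (Algebra.trace (ZMod r) K (a * x)).val) = _
    rw [gaussSum]
    rw [Finset.sum_subset (Finset.subset_univ (univ \ {0})) ?_]
    · refine Finset.sum_congr rfl fun x _ => rfl
    · intro x _ hx
      have hx0 : x = 0 := by
        by_contra h
        exact hx (Finset.mem_sdiff.mpr ⟨Finset.mem_univ x, by simpa using h⟩)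
      rw [hx0]
      show χ 0 * _ = 0
      rw [MulChar.map_zero, zero_mul]
  -- P mapped to E
  set A : Matrix K K E := Matrix.of fun i j : K => χ (j - i) with hA
  have hPmap : P.map f = 1 + A := by
    ext i j
    by_cases h : j = i
    · subst h
      show f (if j = j then 1 else φ (j - j)) = (1 : Matrix K K E) j j + χ (j - j)
      simp [Matrix.one_apply, MulChar.map_zero]
    · show f (if j = i then 1 else φ (j - i)) = (1 : Matrix K K E) i j + χ (j - i)
      rw [if_neg h, Matrix.one_apply_ne (Ne.symm h), zero_add]
      rfl
  have hM : M = (1 + A) * (1 + A).transpose := by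
    show (P * P.transpose).map f = _
    rw [Matrix.map_mul, hPmap, Matrix.transpose_map, hPmap]
  -- main eigen computation
  have heig : ∀ a : K, M.mulVec (η a) =
      (1 + gaussSum χ (ψ.mulShift a) ^ 2) • η a := by
    intro a
    have hηa : η a = fun x => ψ (a * x) := funext fun x => hη a x
    rw [hM, hηa]
    exact auxEigen χ hneg ψ a
  have hneg1 : (-1 : E) = 1 := by
    have h2 : (2 : E) = 0 := by
      have := CharP.cast_eq_zero E 2
      exact_mod_cast this
    linear_combination -h2
  have hg0 : gaussSum χ (ψ.mulShift 0) = 0 := by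
    rw [AddChar.mulShift_zero, gaussSum]
    simp only [AddChar.one_apply, mul_one]
    exact MulChar.sum_eq_zero_of_ne_one hχne
  refine ⟨?_, ?_, ?_⟩
  · -- a = 0
    rw [heig 0, hg0, hneg1]
    norm_num
  · -- a ≠ 0
    intro a ha
    constructor
    · rw [heig a, hgg a, hneg1]
    · rw [hgg a, hneg1]
      intro h
      have : gaussSum χ (ψ.mulShift a) ^ 2 = 0 := by linear_combination h
      exact hgnz a ha (pow_eq_zero_iff two_ne_zero |>.mp this)
  -- hull part
  · set Q : Matrix K K F := 1 + P * P.transpose with hQ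
    have hGG : G * G.transpose = Q := by
      show Matrix.fromCols 1 P * (Matrix.fromCols 1 P).transpose = Q
      rw [Matrix.transpose_fromCols, Matrix.fromCols_mul_fromRows,
        Matrix.transpose_one, mul_one]
    have hQE : Q.map f = 1 + M := by
      show (1 + P * P.transpose).map f = 1 + M
      ext i j
      simp only [Matrix.map_apply, Matrix.add_apply, map_add]
      congr 1
      simp [Matrix.one_apply, apply_ite f]
    -- eigen for Q over E
    have heigQ : ∀ a : K, (Q.map f).mulVec (η a) =
        (gaussSum χ (ψ.mulShift a) ^ 2) • η a := by
      intro a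
      rw [hQE, Matrix.add_mulVec, Matrix.one_mulVec, heig a]
      funext x
      simp only [Pi.add_apply, Pi.smul_apply, smul_eq_mul]
      have h2 : (2 : E) = 0 := by exact_mod_cast CharP.cast_eq_zero E 2
      linear_combination (η a x) * h2
    -- matrix of characters
    set H : Matrix K K E := Matrix.of η with hH
    set cK : E := (Fintype.card K : E) with hcK
    set J : Matrix K K E := Matrix.of fun a b : K => if a + b = 0 then (1 : E) else 0 with hJ
    have hHJ : H * H.transpose = cK • J := by
      ext a b
      show (∑ x, η a x * η b x) = cK * (if a + b = 0 then (1 : E) else 0)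
      have hterm : ∀ x : K, η a x * η b x = (ψ.mulShift (a + b)) x := by
        intro x
        rw [hη, hη, AddChar.mulShift_apply, add_mul, AddChar.map_add_eq_mul]
      rw [Finset.sum_congr rfl fun x _ => hterm x]
      by_cases h : a + b = 0
      · rw [if_pos h, mul_one, h, AddChar.mulShift_zero]
        simp [AddChar.one_apply, hcK]
      · rw [if_neg h, mul_zero]
        exact AddChar.sum_eq_zero_of_ne_one (hψprim h)
    have hJJ : J * J = 1 := by
      ext a b
      show (∑ k, (if a + k = 0 then (1:E) else 0) * (if k + b = 0 then (1:E) else 0)) = _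
      rw [Finset.sum_eq_single (-a)]
      · by_cases h : a = b
        · subst h
          simp [Matrix.one_apply]
        · have : -a + b ≠ 0 := fun hc => h (by linear_combination -hc)
          simp [this, Matrix.one_apply, h]
      · intro k _ hk
        have : a + k ≠ 0 := fun hc => hk (by linear_combination hc)
        simp [this]
      · intro h
        exact absurd (Finset.mem_univ _) h
    have hcKne : cK ≠ 0 := hcardE
    have hHright : H * (H.transpose * (cK⁻¹ • J)) = 1 := by
      rw [← mul_assoc, hHJ, Matrix.smul_mul, Matrix.mul_smul, hJJ, smul_smul,
        mul_inv_cancel₀ hcKne, one_smul]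
    have hHleft : (H.transpose * (cK⁻¹ • J)) * H = 1 := mul_eq_one_comm.mp hHright
    set B : Matrix K K E := (H.transpose * (cK⁻¹ • J)).transpose with hB
    have hHB : H.transpose * B = 1 := by
      rw [hB, ← Matrix.transpose_mul, hHleft, Matrix.transpose_one]
    have hBH : B * H.transpose = 1 := by
      rw [hB, ← Matrix.transpose_mul, hHright, Matrix.transpose_one]
    set dvec : K → E := fun a => gaussSum χ (ψ.mulShift a) ^ 2 with hd
    have hcomm : (Q.map f) * H.transpose = H.transpose * Matrix.diagonal dvec := by
      ext i a
      rw [Matrix.mul_diagonal]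
      have : ((Q.map f) * H.transpose) i a = ((Q.map f).mulVec (η a)) i := by
        simp only [Matrix.mul_apply, Matrix.mulVec, dotProduct]
        rfl
      rw [this, heigQ a]
      simp only [Pi.smul_apply, smul_eq_mul]
      show dvec a * η a i = H.transpose i a * dvec a
      rw [mul_comm]
      rfl
    -- kernel over E is constants
    have hkerE : ∀ w : K → E, (Q.map f).mulVec w = 0 → ∃ cc : E, w = fun _ => cc := by
      intro w hw
      set u : K → E := B.mulVec w with hu
      have hwu : H.transpose.mulVec u = w := by
        rw [hu, Matrix.mulVec_mulVec, hHB, Matrix.one_mulVec]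
      have hdiag : (Matrix.diagonal dvec).mulVec u = 0 := by
        have h1 : H.transpose.mulVec ((Matrix.diagonal dvec).mulVec u) = 0 := by
          rw [Matrix.mulVec_mulVec, ← hcomm, ← Matrix.mulVec_mulVec, hwu, hw]
        have := congrArg (B.mulVec) h1
        rwa [Matrix.mulVec_mulVec, hBH, Matrix.one_mulVec, Matrix.mulVec_zero] at this
      have hu0 : ∀ a : K, a ≠ 0 → u a = 0 := by
        intro a ha
        have := congrFun hdiag a
        rw [Matrix.mulVec_diagonal] at this
        have hda : dvec a ≠ 0 := pow_ne_zero _ (hgnz a ha)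
        exact (mul_eq_zero.mp this).resolve_left hda
      refine ⟨u 0, ?_⟩
      funext x
      rw [← hwu]
      show (∑ a, H.transpose x a * u a) = u 0
      rw [Finset.sum_eq_single 0]
      · show η 0 x * u 0 = u 0
        have : η 0 x = 1 := by
          show ζ ^ (Algebra.trace (ZMod r) K (0 * x)).val = 1
          rw [zero_mul, map_zero, ZMod.val_zero, pow_zero]
        rw [this, one_mul]
      · intro a _ ha
        rw [hu0 a ha, mul_zero]
      · intro h
        exact absurd (Finset.mem_univ _) h
    -- Q * 1 = 0 over F
    have hQone : Q.mulVec (fun _ => (1 : F)) = 0 := by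
      have hmap : (Q.map f).mulVec (fun x => f ((fun _ => (1 : F)) x)) =
          fun i => f (Q.mulVec (fun _ => (1 : F)) i) := mapMulVec f Q _
      have hfone : (fun x : K => f ((1 : F))) = η 0 := by
        funext x
        rw [map_one]
        show (1 : E) = ζ ^ (Algebra.trace (ZMod r) K (0 * x)).val
        rw [zero_mul, map_zero, ZMod.val_zero, pow_zero]
      funext i
      simp only [Pi.zero_apply]
      apply hfinj
      rw [map_zero, ← congrFun hmap i]
      show ((Q.map f).mulVec (fun x : K => f (1 : F))) i = 0
      rw [hfone, heigQ 0, hg0]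
      simp
    -- kernel over F
    have hkerF : LinearMap.ker Q.mulVecLin = Submodule.span F {fun _ => (1 : F)} := by
      apply le_antisymm
      · intro v hv
        rw [LinearMap.mem_ker, Matrix.mulVecLin_apply] at hv
        have hvE : (Q.map f).mulVec (fun x => f (v x)) = 0 := by
          rw [mapMulVec f Q v, hv]
          funext i
          simp
        obtain ⟨cc, hcc⟩ := hkerE _ hvE
        have hconst : ∀ x : K, v x = v 0 := by
          intro x
          apply hfinj
          have h1 := congrFun hcc x
          have h2 := congrFun hcc 0
          rw [h1, h2]
        have : v = (v 0) • (fun _ => (1 : F)) := by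
          funext x
          simp [hconst x]
        rw [this]
        exact Submodule.smul_mem _ _ (Submodule.subset_span rfl)
      · rw [Submodule.span_le, Set.singleton_subset_iff]
        rw [SetLike.mem_coe, LinearMap.mem_ker, Matrix.mulVecLin_apply]
        exact hQone
    -- the hull
    have hC : C = LinearMap.range (Matrix.vecMulLinear G) := (range_vecMulLinear G).symm
    have hrowmem : ∀ i, G i ∈ C := fun i => Submodule.subset_span ⟨i, rfl⟩
    have hhull : C ⊓ dualCode C =
        Submodule.map (Matrix.vecMulLinear G) (LinearMap.ker Q.mulVecLin) := by
      apply le_antisymm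
      · rintro v ⟨hvC, hvD⟩
        rw [hC] at hvC
        obtain ⟨x, rfl⟩ := hvC
        refine ⟨x, LinearMap.mem_ker.mpr ?_, rfl⟩
        rw [Matrix.mulVecLin_apply, ← hGG, ← Matrix.mulVec_mulVec]
        have hGv : G.transpose.mulVec x = Matrix.vecMulLinear G x := by
          rw [Matrix.vecMulLinear_apply, Matrix.mulVec_transpose]
        rw [hGv]
        funext i
        exact hvD (G i) (hrowmem i)
      · rintro v ⟨x, hx, rfl⟩
        have hx' : Q.mulVec x = 0 := hx
        constructor
        · rw [hC]
          exact ⟨x, rfl⟩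
        · intro c hc
          rw [hC] at hc
          obtain ⟨y, rfl⟩ := hc
          show dotProduct (Matrix.vecMulLinear G y) (Matrix.vecMulLinear G x) = 0
          rw [Matrix.vecMulLinear_apply, Matrix.vecMulLinear_apply, ← Matrix.mulVec_transpose G x,
            Matrix.dotProduct_mulVec, Matrix.vecMul_vecMul, hGG, ← Matrix.dotProduct_mulVec, hx',
            dotProduct_zero]
    -- injectivity of x ↦ x ᵥ* G
    have hLinj : Function.Injective (Matrix.vecMulLinear G) := by
      intro x y hxy
      funext j
      have hkey : ∀ z : K → F, (Matrix.vecMulLinear G z) (Sum.inl j) = z j := by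
        intro z
        show (Matrix.vecMul z G) (Sum.inl j) = z j
        have : (fun i => G i (Sum.inl j)) = fun i => (1 : Matrix K K F) i j := by
          funext i
          exact Matrix.fromCols_apply_inl _ _ _ _
        show dotProduct z (fun i => G i (Sum.inl j)) = z j
        rw [this]
        simp [dotProduct, Matrix.one_apply, mul_ite]
      rw [← hkey x, ← hkey y, hxy]
    -- conclude
    have e1 := Submodule.equivMapOfInjective (Matrix.vecMulLinear G) hLinj
      (LinearMap.ker Q.mulVecLin)
    rw [hhull, ← e1.finrank_eq, hkerF]
    apply finrank_span_singleton
    intro h0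
    have := congrFun h0 0
    simp at this
end
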